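/- arXiv:1005.0077 — 2 statements merged into one kernel-verified Lean document; each statement's English description precedes it below -/
import Mathlib

section
/- Let G be a topological group, μ a regular Borel probability measure on G, and φ a Borel measurable quasimorphism on G that is integrable with respect to μ. Then φ is integrable with respect to the n-fold convolution power μ^{*n} for every n ≥ 1, and the limit ℓ_μ(φ) := lim_{n→∞} (1/n) ∫_G φ dμ^{*n} exists in ℝ. -/
open MeasureTheory Filter Topology

/-- The `n`-fold convolution power `μ^{*n}` of a measure on a monoid,
with `μ^{*0} = δ_e`. -/
noncomputable def convPow {G : Type*} [Monoid G] [MeasurableSpace G]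
    (μ : Measure G) : ℕ → Measure G
  | 0 => Measure.dirac 1
  | n + 1 => Measure.map (fun p : G × G => p.1 * p.2) ((convPow μ n).prod μ)

section QM
variable {G : Type*} [Group G] [MeasurableSpace G] (μ : Measure G) [IsProbabilityMeasure μ]

/-- product measure power -/
noncomputable def qmPi (n : ℕ) : Measure (Fin n → G) := Measure.pi fun _ => μ

instance (n : ℕ) : IsProbabilityMeasure (qmPi μ n) := by unfold qmPi; infer_instance

/-- product map -/
def qmProd (n : ℕ) (x : Fin n → G) : G := (List.ofFn x).prod

lemma qmProd_succ (n : ℕ) (x : Fin (n+1) → G) :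
    qmProd n (fun j => x (Fin.castSucc j)) * x (Fin.last n) = qmProd (n+1) x := by
  rw [qmProd, qmProd, List.ofFn_succ', List.prod_concat]

def qmA (μ : Measure G) (n : ℕ) : Prop :=
  AEMeasurable (fun p : G × G => p.1 * p.2) ((convPow μ n).prod μ)

lemma qmMain : ∀ n : ℕ, (∀ k, k < n → qmA μ k) →
    AEMeasurable (qmProd n) (qmPi μ n) ∧
      Measure.map (qmProd n) (qmPi μ n) = convPow μ n := by
  intro n
  induction n with
  | zero =>
    intro _
    have h0 : qmProd (G := G) 0 = fun _ => (1 : G) := by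
      funext x; simp [qmProd]
    constructor
    · rw [h0]; exact aemeasurable_const
    · rw [h0, Measure.map_const]
      simp [convPow]
  | succ n IH =>
    intro H
    obtain ⟨hae, hmap⟩ := IH (fun k hk => H k (hk.trans (Nat.lt_succ_self n)))
    have An : qmA μ n := H n (Nat.lt_succ_self n)
    haveI : IsProbabilityMeasure (convPow μ n) := by
      rw [← hmap]; exact Measure.isProbabilityMeasure_map hae
    set e : (Fin (n+1) → G) ≃ᵐ G × (Fin n → G) :=
      MeasurableEquiv.piFinSuccAbove (fun _ => G) (Fin.last n) with he
    have hpres : MeasurePreserving e (qmPi μ (n+1)) (μ.prod (qmPi μ n)) :=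
      measurePreserving_piFinSuccAbove (fun _ : Fin (n+1) => μ) (Fin.last n)
    have hmapsnd : Measure.map Prod.snd (μ.prod (qmPi μ n)) = qmPi μ n := by
      simp
    set s : G × (Fin n → G) → G × G := fun q => (qmProd n q.2, q.1) with hs_def
    have hs : AEMeasurable s (μ.prod (qmPi μ n)) := by
      have h2 : AEMeasurable (fun q : G × (Fin n → G) => qmProd n q.2) (μ.prod (qmPi μ n)) := by
        have : AEMeasurable (qmProd n) (Measure.map Prod.snd (μ.prod (qmPi μ n))) := by
          rw [hmapsnd]; exact hae
        exact this.comp_aemeasurable measurable_snd.aemeasurable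
      exact h2.prodMk measurable_fst.aemeasurable
    have hmk : qmProd n =ᵐ[qmPi μ n] hae.mk _ := hae.ae_eq_mk
    have hsnd_tendsto : Tendsto Prod.snd (ae (μ.prod (qmPi μ n))) (ae (qmPi μ n)) := by
      have := Measure.tendsto_ae_map
        (measurable_snd.aemeasurable :
          AEMeasurable (Prod.snd : G × (Fin n → G) → Fin n → G) (μ.prod (qmPi μ n)))
      rwa [hmapsnd] at this
    have hs_eq : s =ᵐ[μ.prod (qmPi μ n)] fun q => (hae.mk _ q.2, q.1) := by
      filter_upwards [hmk.comp_tendsto hsnd_tendsto] with q hq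
      simp only [hs_def, Function.comp_apply] at hq ⊢
      rw [hq]
    have hmaps : Measure.map s (μ.prod (qmPi μ n)) = (convPow μ n).prod μ := by
      rw [Measure.map_congr hs_eq]
      have hfac : (fun q : G × (Fin n → G) => (hae.mk _ q.2, q.1))
          = (Prod.map (hae.mk _) id) ∘ Prod.swap := rfl
      rw [hfac, ← Measure.map_map (hae.measurable_mk.prodMap measurable_id) measurable_swap,
        Measure.prod_swap, ← Measure.map_prod_map _ _ hae.measurable_mk measurable_id,
        Measure.map_congr hmk.symm, hmap, Measure.map_id]
    have hg : AEMeasurable (fun q : G × (Fin n → G) => qmProd n q.2 * q.1)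
        (μ.prod (qmPi μ n)) := by
      have hmul : AEMeasurable (fun p : G × G => p.1 * p.2)
          (Measure.map s (μ.prod (qmPi μ n))) := by rw [hmaps]; exact An
      exact hmul.comp_aemeasurable hs
    have hcomp : qmProd (n+1) = (fun q : G × (Fin n → G) => qmProd n q.2 * q.1) ∘ e := by
      funext x
      simp only [Function.comp_apply, he, MeasurableEquiv.piFinSuccAbove_apply,
        Fin.insertNthEquiv_symm_apply, Fin.removeNth_last]
      rw [← qmProd_succ]
      rfl
    have hgE : AEMeasurable ((fun q : G × (Fin n → G) => qmProd n q.2 * q.1))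
        (Measure.map e (qmPi μ (n+1))) := by rw [hpres.map_eq]; exact hg
    constructor
    · rw [hcomp]
      exact hgE.comp_aemeasurable e.measurable.aemeasurable
    · rw [hcomp, ← AEMeasurable.map_map_of_aemeasurable hgE e.measurable.aemeasurable,
        hpres.map_eq]
      have hfac2 : (fun q : G × (Fin n → G) => qmProd n q.2 * q.1)
          = (fun p : G × G => p.1 * p.2) ∘ s := rfl
      have hmul : AEMeasurable (fun p : G × G => p.1 * p.2)
          (Measure.map s (μ.prod (qmPi μ n))) := by rw [hmaps]; exact An
      rw [hfac2, ← AEMeasurable.map_map_of_aemeasurable hmul hs, hmaps]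
      rfl

/-- abs bound -/
lemma qmAbsBound {φ : G → ℝ} {D : ℝ} (hD : ∀ g h : G, |φ (g * h) - φ g - φ h| ≤ D)
    (u v : G) : |φ (u * v)| ≤ |φ u| + |φ v| + D := by
  have h3 := abs_le.mp (hD u v)
  exact abs_le.mpr ⟨by linarith [neg_abs_le (φ u), neg_abs_le (φ v)],
    by linarith [le_abs_self (φ u), le_abs_self (φ v)]⟩

lemma qmProd_symm_e (n : ℕ) (q : G × (Fin n → G)) :
    qmProd (n+1) ((MeasurableEquiv.piFinSuccAbove (fun _ : Fin (n+1) => G) (Fin.last n)).symm q)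
      = qmProd n q.2 * q.1 := by
  rw [← qmProd_succ]
  set x := (MeasurableEquiv.piFinSuccAbove (fun _ : Fin (n+1) => G) (Fin.last n)).symm q with hx
  have h1 : x (Fin.last n) = q.1 := by
    simp [hx, MeasurableEquiv.piFinSuccAbove_symm_apply]
  have h2 : (fun j => x (Fin.castSucc j)) = q.2 := by
    funext j
    simp [hx, MeasurableEquiv.piFinSuccAbove_symm_apply, Fin.snoc_castSucc]
  rw [h1, h2]

lemma qmInt (φ : G → ℝ) (hmeas : Measurable φ) (hint : Integrable φ μ) {D : ℝ}
    (hD : ∀ g h : G, |φ (g * h) - φ g - φ h| ≤ D) :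
    ∀ n : ℕ, (∀ k, k < n → qmA μ k) → Integrable (fun x => φ (qmProd n x)) (qmPi μ n) := by
  intro n
  induction n with
  | zero =>
    intro _
    have : (fun x : Fin 0 → G => φ (qmProd 0 x)) = fun _ => φ 1 := by
      funext x; simp [qmProd]
    rw [this]; exact integrable_const _
  | succ n IH =>
    intro H
    have Hn : ∀ k, k < n → qmA μ k := fun k hk => H k (hk.trans (Nat.lt_succ_self n))
    obtain ⟨hae, hmap⟩ := qmMain μ n Hn
    have hIH := IH Hn
    obtain ⟨haeS, _⟩ := qmMain μ (n+1) H
    set e : (Fin (n+1) → G) ≃ᵐ G × (Fin n → G) :=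
      MeasurableEquiv.piFinSuccAbove (fun _ => G) (Fin.last n) with he
    have hpres : MeasurePreserving e (qmPi μ (n+1)) (μ.prod (qmPi μ n)) :=
      measurePreserving_piFinSuccAbove (fun _ : Fin (n+1) => μ) (Fin.last n)
    have hmapsym : Measure.map e.symm (μ.prod (qmPi μ n)) = qmPi μ (n+1) :=
      (hpres.symm e).map_eq
    have hmapsnd : Measure.map Prod.snd (μ.prod (qmPi μ n)) = qmPi μ n := by simp
    have hmapfst : Measure.map (Prod.fst : G × (Fin n → G) → G) (μ.prod (qmPi μ n)) = μ := by
      simp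
    rw [← hmapsym, integrable_map_equiv]
    have hfun : ((fun x => φ (qmProd (n+1) x)) ∘ e.symm)
        = fun q : G × (Fin n → G) => φ (qmProd n q.2 * q.1) := by
      funext q
      simp only [Function.comp_apply, he]
      rw [qmProd_symm_e]
    rw [hfun]
    have hasm : AEStronglyMeasurable (fun q : G × (Fin n → G) => φ (qmProd n q.2 * q.1))
        (μ.prod (qmPi μ n)) := by
      have h1 : AEMeasurable (fun x => φ (qmProd (n+1) x))
          (Measure.map e.symm (μ.prod (qmPi μ n))) := by
        rw [hmapsym]
        exact hmeas.comp_aemeasurable haeS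
      have h2 := h1.comp_aemeasurable e.symm.measurable.aemeasurable
      have : (fun x => φ (qmProd (n+1) x)) ∘ e.symm
          = fun q : G × (Fin n → G) => φ (qmProd n q.2 * q.1) := hfun
      rw [this] at h2
      exact h2.aestronglyMeasurable
    have h1 : Integrable (fun q : G × (Fin n → G) => φ (qmProd n q.2)) (μ.prod (qmPi μ n)) := by
      have := (integrable_map_measure (f := (Prod.snd : G × (Fin n → G) → Fin n → G))
        (g := fun x => φ (qmProd n x)) (by rw [hmapsnd]; exact (hmeas.comp_aemeasurable hae).aestronglyMeasurable)
        measurable_snd.aemeasurable).mp (by rw [hmapsnd]; exact hIH)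
      exact this
    have h2 : Integrable (fun q : G × (Fin n → G) => φ q.1) (μ.prod (qmPi μ n)) := by
      have := (integrable_map_measure (f := (Prod.fst : G × (Fin n → G) → G))
        (g := φ) (by rw [hmapfst]; exact hmeas.aestronglyMeasurable)
        measurable_fst.aemeasurable).mp (by rw [hmapfst]; exact hint)
      exact this
    refine Integrable.mono' ((h1.abs.add h2.abs).add (integrable_const D)) hasm ?_
    filter_upwards with q
    rw [Real.norm_eq_abs]
    exact qmAbsBound hD _ _

lemma qmIntConv (φ : G → ℝ) (hmeas : Measurable φ) (hint : Integrable φ μ) {D : ℝ}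
    (hD : ∀ g h : G, |φ (g * h) - φ g - φ h| ≤ D)
    (n : ℕ) (H : ∀ k, k < n → qmA μ k) : Integrable φ (convPow μ n) := by
  obtain ⟨hae, hmap⟩ := qmMain μ n H
  rw [← hmap]
  refine (integrable_map_measure ?_ hae).mpr (qmInt μ φ hmeas hint hD n H)
  exact hmeas.aestronglyMeasurable

lemma qmIntegralEq (φ : G → ℝ) (hmeas : Measurable φ)
    (n : ℕ) (H : ∀ k, k < n → qmA μ k) :
    ∫ g, φ g ∂(convPow μ n) = ∫ x, φ (qmProd n x) ∂(qmPi μ n) := by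
  obtain ⟨hae, hmap⟩ := qmMain μ n H
  rw [← hmap, integral_map hae hmeas.aestronglyMeasurable]


lemma qmSplit (m n : ℕ) (z : (Fin m → G) × (Fin n → G)) :
    qmProd (m+n)
      (((MeasurableEquiv.sumPiEquivProdPi (fun _ : Fin m ⊕ Fin n => G)).symm.trans
        (MeasurableEquiv.piCongrLeft (fun _ => G) finSumFinEquiv)) z)
      = qmProd m z.1 * qmProd n z.2 := by
  set w := ((MeasurableEquiv.sumPiEquivProdPi (fun _ : Fin m ⊕ Fin n => G)).symm.trans
        (MeasurableEquiv.piCongrLeft (fun _ => G) finSumFinEquiv)) z with hw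
  have hcast : ∀ i : Fin m, w (Fin.castAdd n i) = z.1 i := by
    intro i
    have : w (finSumFinEquiv (Sum.inl i)) = z.1 i := by
      simp only [hw, MeasurableEquiv.trans_apply,
        MeasurableEquiv.coe_sumPiEquivProdPi_symm]
      exact Equiv.piCongrLeft_sumInl (fun _ => G) finSumFinEquiv z.1 z.2 i
    simpa [finSumFinEquiv_apply_left] using this
  have hnat : ∀ j : Fin n, w (Fin.natAdd m j) = z.2 j := by
    intro j
    have : w (finSumFinEquiv (Sum.inr j)) = z.2 j := by
      simp only [hw, MeasurableEquiv.trans_apply,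
        MeasurableEquiv.coe_sumPiEquivProdPi_symm]
      exact Equiv.piCongrLeft_sumInr (fun _ => G) finSumFinEquiv z.1 z.2 j
    simpa [finSumFinEquiv_apply_right] using this
  rw [qmProd, List.ofFn_add, List.prod_append,
    show (fun i => w (Fin.castLE (Nat.le_add_right m n) i)) = z.1 from funext hcast, funext hnat]
  rfl

lemma qmSubadd (φ : G → ℝ) (hmeas : Measurable φ) (hint : Integrable φ μ) {D : ℝ}
    (hD : ∀ g h : G, |φ (g * h) - φ g - φ h| ≤ D)
    (HA : ∀ k, qmA μ k) (m n : ℕ) :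
    |(∫ g, φ g ∂(convPow μ (m+n))) - (∫ g, φ g ∂(convPow μ m))
        - (∫ g, φ g ∂(convPow μ n))| ≤ D := by
  have Hall : ∀ N : ℕ, ∀ k, k < N → qmA μ k := fun _ k _ => HA k
  set F : (Fin m → G) × (Fin n → G) ≃ᵐ (Fin (m+n) → G) :=
    (MeasurableEquiv.sumPiEquivProdPi (fun _ : Fin m ⊕ Fin n => G)).symm.trans
      (MeasurableEquiv.piCongrLeft (fun _ => G) finSumFinEquiv) with hF
  have hpres : MeasurePreserving F ((qmPi μ m).prod (qmPi μ n)) (qmPi μ (m+n)) :=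
    (measurePreserving_piCongrLeft (fun _ : Fin (m+n) => μ) finSumFinEquiv).comp
      (measurePreserving_sumPiEquivProdPi_symm (fun _ : Fin m ⊕ Fin n => μ))
  have hIm := qmInt μ φ hmeas hint hD m (Hall m)
  have hIn := qmInt μ φ hmeas hint hD n (Hall n)
  have hImn := qmInt μ φ hmeas hint hD (m+n) (Hall (m+n))
  obtain ⟨haem, _⟩ := qmMain μ m (Hall m)
  obtain ⟨haen, _⟩ := qmMain μ n (Hall n)
  have hmapfst : Measure.map Prod.fst ((qmPi μ m).prod (qmPi μ n)) = qmPi μ m := by simp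
  have hmapsnd : Measure.map Prod.snd ((qmPi μ m).prod (qmPi μ n)) = qmPi μ n := by simp
  have hasm1 : AEStronglyMeasurable (fun x : Fin m → G => φ (qmProd m x))
      (Measure.map (Prod.fst : (Fin m → G) × (Fin n → G) → Fin m → G)
        ((qmPi μ m).prod (qmPi μ n))) := by
    rw [hmapfst]; exact (hmeas.comp_aemeasurable haem).aestronglyMeasurable
  have hasm2 : AEStronglyMeasurable (fun x : Fin n → G => φ (qmProd n x))
      (Measure.map (Prod.snd : (Fin m → G) × (Fin n → G) → Fin n → G)
        ((qmPi μ m).prod (qmPi μ n))) := by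
    rw [hmapsnd]; exact (hmeas.comp_aemeasurable haen).aestronglyMeasurable
  -- the three integrands
  have hi1 : Integrable (fun z : (Fin m → G) × (Fin n → G) =>
      φ (qmProd m z.1 * qmProd n z.2)) ((qmPi μ m).prod (qmPi μ n)) := by
    have := (integrable_map_equiv F (fun x => φ (qmProd (m+n) x))).mp
      (by rw [hpres.map_eq]; exact hImn)
    refine this.congr ?_
    filter_upwards with z
    simp only [Function.comp_apply, hF]
    rw [qmSplit]
  have hi2 : Integrable (fun z : (Fin m → G) × (Fin n → G) =>
      φ (qmProd m z.1)) ((qmPi μ m).prod (qmPi μ n)) := by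
    exact (integrable_map_measure hasm1
      measurable_fst.aemeasurable).mp (by rw [hmapfst]; exact hIm)
  have hi3 : Integrable (fun z : (Fin m → G) × (Fin n → G) =>
      φ (qmProd n z.2)) ((qmPi μ m).prod (qmPi μ n)) := by
    exact (integrable_map_measure hasm2
      measurable_snd.aemeasurable).mp (by rw [hmapsnd]; exact hIn)
  -- identify the integrals
  have e1 : ∫ g, φ g ∂(convPow μ (m+n))
      = ∫ z, φ (qmProd m z.1 * qmProd n z.2) ∂((qmPi μ m).prod (qmPi μ n)) := by
    rw [qmIntegralEq μ φ hmeas (m+n) (Hall (m+n)),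
      ← hpres.integral_comp' (fun x => φ (qmProd (m+n) x))]
    congr 1
    funext z
    rw [qmSplit]
  have e2 : ∫ g, φ g ∂(convPow μ m)
      = ∫ z, φ (qmProd m z.1) ∂((qmPi μ m).prod (qmPi μ n)) := by
    have h := integral_map (μ := (qmPi μ m).prod (qmPi μ n))
      measurable_fst.aemeasurable hasm1
    rw [hmapfst] at h
    rw [qmIntegralEq μ φ hmeas m (Hall m)]
    exact h
  have e3 : ∫ g, φ g ∂(convPow μ n)
      = ∫ z, φ (qmProd n z.2) ∂((qmPi μ m).prod (qmPi μ n)) := by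
    have h := integral_map (μ := (qmPi μ m).prod (qmPi μ n))
      measurable_snd.aemeasurable hasm2
    rw [hmapsnd] at h
    rw [qmIntegralEq μ φ hmeas n (Hall n)]
    exact h
  rw [e1, e2, e3]
  have hi12 : Integrable (fun z : (Fin m → G) × (Fin n → G) =>
      φ (qmProd m z.1 * qmProd n z.2) - φ (qmProd m z.1)) ((qmPi μ m).prod (qmPi μ n)) :=
    hi1.sub hi2
  have hsub : ∫ z, (φ (qmProd m z.1 * qmProd n z.2) - φ (qmProd m z.1) - φ (qmProd n z.2))
        ∂((qmPi μ m).prod (qmPi μ n))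
      = (∫ z, φ (qmProd m z.1 * qmProd n z.2) ∂((qmPi μ m).prod (qmPi μ n)))
        - (∫ z, φ (qmProd m z.1) ∂((qmPi μ m).prod (qmPi μ n)))
        - (∫ z, φ (qmProd n z.2) ∂((qmPi μ m).prod (qmPi μ n))) := by
    rw [integral_sub hi12 hi3, integral_sub hi1 hi2]
  rw [← hsub]
  have hb : ∀ z : (Fin m → G) × (Fin n → G),
      ‖φ (qmProd m z.1 * qmProd n z.2) - φ (qmProd m z.1) - φ (qmProd n z.2)‖ ≤ D := by
    intro z
    rw [Real.norm_eq_abs]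
    exact hD _ _
  calc |∫ z, (φ (qmProd m z.1 * qmProd n z.2) - φ (qmProd m z.1) - φ (qmProd n z.2))
        ∂((qmPi μ m).prod (qmPi μ n))|
      ≤ D * (((qmPi μ m).prod (qmPi μ n)) Set.univ).toReal := by
        rw [← Real.norm_eq_abs]
        exact norm_integral_le_of_norm_le_const (Filter.Eventually.of_forall hb)
    _ = D := by simp

lemma qmZero (k : ℕ) (hk : ¬ qmA μ k) : ∀ j, k < j → convPow μ j = 0 := by
  intro j
  induction j with
  | zero => intro hj; omega
  | succ j IH =>
    intro hj
    rcases Nat.lt_succ_iff_lt_or_eq.mp hj with h | h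
    · have h0 := IH h
      show Measure.map (fun p : G × G => p.1 * p.2) ((convPow μ j).prod μ) = 0
      rw [h0]
      simp
    · show Measure.map (fun p : G × G => p.1 * p.2) ((convPow μ j).prod μ) = 0
      exact Measure.map_of_not_aemeasurable (h ▸ hk)

end QM

/-- for a Borel measurable, `μ`-integrable quasimorphism `φ` on a topological
group `G` equipped with a regular Borel probability measure `μ`, the function `φ` is
`μ^{*n}`-integrable for all `n ≥ 1` and the μ-distortion
`ℓ_μ(φ) = lim_n (1/n) ∫ φ dμ^{*n}` exists. -/


theorem quasimorphism_distortion_exists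
    {G : Type*} [Group G] [TopologicalSpace G] [IsTopologicalGroup G]
    [MeasurableSpace G] [BorelSpace G]
    (μ : Measure G) [IsProbabilityMeasure μ] (hreg : μ.Regular)
    (φ : G → ℝ) (hmeas : Measurable φ)
    (hqm : ∃ D : ℝ, ∀ g h : G, |φ (g * h) - φ g - φ h| ≤ D)
    (hint : Integrable φ μ) :
    (∀ n : ℕ, 1 ≤ n → Integrable φ (convPow μ n)) ∧
      ∃ L : ℝ, Tendsto (fun n : ℕ => (∫ g, φ g ∂(convPow μ n)) / n) atTop (𝓝 L) := by
  classical
  obtain ⟨D, hD⟩ := hqm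
  have hD0 : 0 ≤ D := (abs_nonneg _).trans (by simpa using hD 1 1)
  by_cases HA : ∀ k, qmA μ k
  · constructor
    · intro n _
      exact qmIntConv μ φ hmeas hint hD n fun k _ => HA k
    · set a : ℕ → ℝ := fun n => ∫ g, φ g ∂(convPow μ n) with ha
      have hsub : ∀ m n : ℕ, |a (m + n) - a m - a n| ≤ D :=
        fun m n => qmSubadd μ φ hmeas hint hD HA m n
      have hu : Subadditive fun n => a n + D := by
        intro m n
        have h := abs_le.mp (hsub m n)
        dsimp only
        linarith [h.2]
      have hlow : ∀ n : ℕ, 1 ≤ n → (n : ℝ) * (a 1 - D) ≤ a n := by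
        refine Nat.le_induction ?_ ?_
        · simpa using by linarith
        · intro n hn IH
          have h := abs_le.mp (hsub n 1)
          push_cast
          linarith [h.1]
      have hbdd : BddBelow (Set.range fun n : ℕ => (a n + D) / n) := by
        refine ⟨min (a 1 - D) 0, ?_⟩
        rintro x ⟨n, rfl⟩
        rcases Nat.eq_zero_or_pos n with h0 | h1
        · subst h0
          simpa using min_le_right (a 1 - D) (0 : ℝ)
        · have hn' : (0 : ℝ) < n := by exact_mod_cast h1
          have hl := hlow n h1
          have h2 : a 1 - D ≤ (a n + D) / n := by
            rw [le_div_iff₀ hn']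
            have h3 : (a 1 - D) * n = n * (a 1 - D) := mul_comm _ _
            linarith
          exact le_trans (min_le_left _ _) h2
      refine ⟨hu.lim, ?_⟩
      have h1 := hu.tendsto_lim hbdd
      have h2 : Tendsto (fun n : ℕ => D / (n : ℝ)) atTop (𝓝 0) :=
        tendsto_const_div_atTop_nhds_zero_nat D
      have h3 := h1.sub h2
      rw [sub_zero] at h3
      refine h3.congr fun n => ?_
      rw [div_sub_div_same, add_sub_cancel_right]
  · push_neg at HA
    have hex : ∃ k, ¬ qmA μ k := HA
    set k0 := Nat.find hex with hk0
    have hspec : ¬ qmA μ k0 := Nat.find_spec hex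
    have hmin : ∀ j, j < k0 → qmA μ j := fun j hj => not_not.mp (Nat.find_min hex hj)
    have hzero : ∀ j, k0 < j → convPow μ j = 0 := qmZero μ k0 hspec
    constructor
    · intro n _
      rcases le_or_gt n k0 with h | h
      · exact qmIntConv μ φ hmeas hint hD n fun j hj => hmin j (lt_of_lt_of_le hj h)
      · rw [hzero n h]
        exact integrable_zero_measure
    · refine ⟨0, ?_⟩
      have hev : ∀ᶠ n : ℕ in atTop, (∫ g, φ g ∂(convPow μ n)) / n = 0 := by
        filter_upwards [eventually_gt_atTop k0] with n hn
        rw [hzero n hn, integral_zero_measure, zero_div]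
      exact Tendsto.congr' (EventuallyEq.symm hev) tendsto_const_nhds
end

section
/- Let G be a topological group, μ a regular Borel probability measure on G that is symmetric, i.e. ι_*μ = μ where ι(g) = g^{−1}, and φ a Borel measurable, μ-integrable quasimorphism on G. Then the μ-distortion of φ vanishes: ℓ_μ(φ) = 0. -/
open MeasureTheory Filter Topology

section Helpers
variable {G : Type*} [Group G] [TopologicalSpace G] [IsTopologicalGroup G]
    [MeasurableSpace G] [BorelSpace G]

lemma mapMapEquiv {α β γ : Type*} [MeasurableSpace α] [MeasurableSpace β] [MeasurableSpace γ]
    (e : α ≃ᵐ β) (f : β → γ) (ρ : Measure α) :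
    (ρ.map e).map f = ρ.map (f ∘ e) := by
  by_cases h : AEMeasurable f (ρ.map e)
  · exact AEMeasurable.map_map_of_aemeasurable h e.measurable.aemeasurable
  · rw [Measure.map_of_not_aemeasurable h, Measure.map_of_not_aemeasurable
      (fun h' => h ((aemeasurable_map_equiv_iff e).2 h'))]

noncomputable def swapInv (G : Type*) [Group G] [TopologicalSpace G] [IsTopologicalGroup G]
    [MeasurableSpace G] [BorelSpace G] : G × G ≃ᵐ G × G :=
  (MeasurableEquiv.prodComm : G × G ≃ᵐ G × G).trans
    ((MeasurableEquiv.inv G).prodCongr (MeasurableEquiv.inv G))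

lemma swapInv_apply (p : G × G) : swapInv G p = (p.2⁻¹, p.1⁻¹) := by
  rfl

lemma coe_swapInv : (⇑(swapInv G)) =
    (Prod.map (fun g : G => g⁻¹) (fun g : G => g⁻¹)) ∘ Prod.swap := by
  funext p; exact swapInv_apply p

lemma map_swapInv_prod (ρ σ : Measure G) [SFinite ρ] [SFinite σ]
    (hρ : Measure.map (fun g : G => g⁻¹) ρ = ρ) (hσ : Measure.map (fun g : G => g⁻¹) σ = σ) :
    Measure.map (swapInv G) (ρ.prod σ) = σ.prod ρ := by
  rw [coe_swapInv, ← Measure.map_map (measurable_inv.prodMap measurable_inv) measurable_swap,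
    Measure.prod_swap, ← Measure.map_prod_map _ _ measurable_inv measurable_inv, hρ, hσ]

lemma mul_comp_swapInv :
    (fun p : G × G => p.1 * p.2) ∘ (swapInv G) = (fun g : G => g⁻¹) ∘ (fun p : G × G => p.1 * p.2) := by
  funext p; simp [swapInv_apply, mul_inv_rev]

/-- transfer of a.e.-measurability of multiplication across the two product orders,
for symmetric measures. -/
lemma aem_mul_swap (ρ σ : Measure G) [SFinite ρ] [SFinite σ]
    (hρ : Measure.map (fun g : G => g⁻¹) ρ = ρ) (hσ : Measure.map (fun g : G => g⁻¹) σ = σ)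
    (h : AEMeasurable (fun p : G × G => p.1 * p.2) (ρ.prod σ)) :
    AEMeasurable (fun p : G × G => p.1 * p.2) (σ.prod ρ) := by
  have h2 : AEMeasurable ((fun p : G × G => p.1 * p.2) ∘ (swapInv G)) (ρ.prod σ) := by
    rw [mul_comp_swapInv]
    exact measurable_inv.comp_aemeasurable h
  have h3 := (aemeasurable_map_equiv_iff (swapInv G)).2 h2
  rwa [map_swapInv_prod ρ σ hρ hσ] at h3
end Helpers

section Key
variable {G : Type*} [Group G] [TopologicalSpace G] [IsTopologicalGroup G]
    [MeasurableSpace G] [BorelSpace G]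

lemma convPow_key (μ : Measure G) [IsProbabilityMeasure μ]
    (hsymm : Measure.map (fun g : G => g⁻¹) μ = μ) (n : ℕ) :
    convPow μ n = 0 ∨ (IsProbabilityMeasure (convPow μ n) ∧
      Measure.map (fun g : G => g⁻¹) (convPow μ n) = convPow μ n ∧
      Measure.map (fun p : G × G => p.1 * p.2) (μ.prod (convPow μ n)) = convPow μ (n + 1)) := by
  set m : G × G → G := fun p => p.1 * p.2 with hm_def
  induction n with
  | zero =>
    right
    refine ⟨by simpa [convPow] using inferInstanceAs (IsProbabilityMeasure (Measure.dirac (1:G))),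
      ?_, ?_⟩
    · simp only [convPow]
      rw [Measure.map_dirac' measurable_inv]
      simp
    · simp only [convPow]
      by_cases h : AEMeasurable m ((Measure.dirac (1:G)).prod μ)
      · have h' : AEMeasurable m (μ.prod (Measure.dirac (1:G))) :=
          aem_mul_swap _ _ (by rw [Measure.map_dirac' measurable_inv]; simp) hsymm h
        have e1 : Measure.map m (μ.prod (Measure.dirac (1:G))) = μ := by
          rw [Measure.prod_dirac] at h' ⊢
          rw [AEMeasurable.map_map_of_aemeasurable h' (measurable_prodMk_right).aemeasurable]
          have : m ∘ (fun x : G => (x, (1:G))) = fun x => x := by funext x; simp [hm_def]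
          rw [this, Measure.map_id']
        have e2 : Measure.map m ((Measure.dirac (1:G)).prod μ) = μ := by
          rw [Measure.dirac_prod] at h ⊢
          rw [AEMeasurable.map_map_of_aemeasurable h (measurable_prodMk_left).aemeasurable]
          have : m ∘ (Prod.mk (1:G)) = fun x => x := by funext x; simp [hm_def]
          rw [this, Measure.map_id']
        rw [e1, e2]
      · have h' : ¬ AEMeasurable m (μ.prod (Measure.dirac (1:G))) := fun h' =>
          h (aem_mul_swap _ _ hsymm (by rw [Measure.map_dirac' measurable_inv]; simp) h')
        rw [Measure.map_of_not_aemeasurable h', Measure.map_of_not_aemeasurable h]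
  | succ n IH =>
    rcases IH with h0 | ⟨hprob, hsym, hcomm⟩
    · left; simp only [convPow, h0]
      simp
    · set ν := convPow μ n with hν
      haveI : IsProbabilityMeasure ν := hprob
      have hdef : convPow μ (n+1) = Measure.map m (ν.prod μ) := rfl
      by_cases hm : AEMeasurable m (ν.prod μ)
      · -- good case
        have hm' : AEMeasurable m (μ.prod ν) := aem_mul_swap _ _ hsym hsymm hm
        have hprob1 : IsProbabilityMeasure (convPow μ (n+1)) := by
          rw [hdef]; exact Measure.isProbabilityMeasure_map hm
        haveI := hprob1
        have hsym1 : Measure.map (fun g : G => g⁻¹) (convPow μ (n+1)) = convPow μ (n+1) := by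
          rw [hdef, AEMeasurable.map_map_of_aemeasurable measurable_inv.aemeasurable hm]
          have e3 : (fun g : G => g⁻¹) ∘ m = m ∘ (swapInv G) := mul_comp_swapInv.symm
          rw [e3, ← mapMapEquiv (swapInv G) m (ν.prod μ), map_swapInv_prod ν μ hsym hsymm,
            hcomm, hdef]
        refine Or.inr ⟨hprob1, hsym1, ?_⟩
        -- commutation at level n+1
        by_cases H : AEMeasurable m ((convPow μ (n+1)).prod μ)
        · have H' : AEMeasurable m (μ.prod (convPow μ (n+1))) :=
            aem_mul_swap _ _ hsym1 hsymm H
          -- measurable representatives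
          obtain ⟨mt, hmt, haet⟩ := hm   -- m =ᵐ[ν.prod μ] mt
          obtain ⟨mh, hmh, haeh⟩ := hm'  -- m =ᵐ[μ.prod ν] mh
          set B : Measure ((G × G) × G) := (μ.prod ν).prod μ with hB
          -- LHS
          have eLHS : Measure.map m (μ.prod (convPow μ (n+1)))
              = Measure.map (fun q : (G × G) × G => q.1.1 * (q.1.2 * q.2)) B := by
            have h1 : convPow μ (n+1) = Measure.map mt (ν.prod μ) := by
              rw [hdef]; exact Measure.map_congr haet
            have h2 : μ.prod (convPow μ (n+1))
                = Measure.map (Prod.map (id : G → G) mt) (μ.prod (ν.prod μ)) := by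
              rw [h1, ← Measure.map_prod_map _ _ measurable_id hmt, Measure.map_id]
            have h3 : AEMeasurable m
                (Measure.map (Prod.map (id : G → G) mt) (μ.prod (ν.prod μ))) := by
              rw [← h2]; exact H'
            rw [h2, AEMeasurable.map_map_of_aemeasurable h3
              ((measurable_id.prodMap hmt).aemeasurable)]
            -- now base is μ.prod (ν.prod μ); re-associate
            have h4 : μ.prod (ν.prod μ) = Measure.map (MeasurableEquiv.prodAssoc) B := by
              rw [hB, Measure.prodAssoc_prod]
            rw [h4, mapMapEquiv]
            -- function: (m ∘ Prod.map id mt) ∘ prodAssoc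
            have h5 : (m ∘ Prod.map (id : G → G) mt) ∘ (MeasurableEquiv.prodAssoc)
                = fun q : (G × G) × G => q.1.1 * mt (q.1.2, q.2) := rfl
            rw [h5]
            -- a.e. replace mt by m
            have hπ : Measure.map (fun q : (G × G) × G => (q.1.2, q.2)) B = ν.prod μ := by
              have : (fun q : (G × G) × G => (q.1.2, q.2))
                  = Prod.map (Prod.snd : G × G → G) (id : G → G) := rfl
              rw [this, hB, ← Measure.map_prod_map _ _ measurable_snd measurable_id,
                Measure.map_id, Measure.map_snd_prod]
              simp
            have hcomp : (fun q : (G × G) × G => m (q.1.2, q.2))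
                =ᵐ[B] (fun q : (G × G) × G => mt (q.1.2, q.2)) := by
              have := MeasureTheory.ae_eq_comp
                (f := fun q : (G × G) × G => (q.1.2, q.2)) (g := m) (g' := mt)
                ((measurable_snd.comp measurable_fst).prodMk measurable_snd).aemeasurable
                (by rw [hπ]; exact haet)
              exact this
            refine Measure.map_congr ?_
            filter_upwards [hcomp] with q hq
            simp only [hm_def] at hq ⊢
            rw [← hq]
          -- RHS
          have eRHS : Measure.map m ((convPow μ (n+1)).prod μ)
              = Measure.map (fun q : (G × G) × G => (q.1.1 * q.1.2) * q.2) B := by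
            have h1 : convPow μ (n+1) = Measure.map mh (μ.prod ν) := by
              rw [← hcomm]; exact Measure.map_congr haeh
            have h2 : (convPow μ (n+1)).prod μ
                = Measure.map (Prod.map mh (id : G → G)) B := by
              rw [h1, hB, ← Measure.map_prod_map _ _ hmh measurable_id, Measure.map_id]
            have h3 : AEMeasurable m (Measure.map (Prod.map mh (id : G → G)) B) := by
              rw [← h2]; exact H
            rw [h2, AEMeasurable.map_map_of_aemeasurable h3
              ((hmh.prodMap measurable_id).aemeasurable)]
            have h5 : m ∘ Prod.map mh (id : G → G)
                = fun q : (G × G) × G => mh q.1 * q.2 := rfl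
            rw [h5]
            have hπ : Measure.map (Prod.fst : (G × G) × G → G × G) B = μ.prod ν := by
              rw [hB, Measure.map_fst_prod]; simp
            have hcomp : (fun q : (G × G) × G => m q.1)
                =ᵐ[B] (fun q : (G × G) × G => mh q.1) := by
              exact MeasureTheory.ae_eq_comp (f := (Prod.fst : (G × G) × G → G × G))
                (g := m) (g' := mh) measurable_fst.aemeasurable (by rw [hπ]; exact haeh)
            refine Measure.map_congr ?_
            filter_upwards [hcomp] with q hq
            simp only [hm_def] at hq ⊢
            rw [← hq]
          have : convPow μ (n+2) = Measure.map m ((convPow μ (n+1)).prod μ) := rfl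
          rw [this, eLHS, eRHS]
          congr 1
          funext q
          rw [mul_assoc]
        · have H' : ¬ AEMeasurable m (μ.prod (convPow μ (n+1))) := fun h' =>
            H (aem_mul_swap _ _ hsymm hsym1 h')
          have : convPow μ (n+2) = Measure.map m ((convPow μ (n+1)).prod μ) := rfl
          rw [this, Measure.map_of_not_aemeasurable H', Measure.map_of_not_aemeasurable H]
      · left
        rw [hdef, Measure.map_of_not_aemeasurable hm]
end Key

section Bound
variable {G : Type*} [Group G] [TopologicalSpace G] [IsTopologicalGroup G]
    [MeasurableSpace G] [BorelSpace G]

lemma integral_abs_le_defect (ν : Measure G)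
    (hν : ν = 0 ∨ (IsProbabilityMeasure ν ∧ Measure.map (fun g : G => g⁻¹) ν = ν))
    (φ : G → ℝ) (hmeas : Measurable φ) (D : ℝ)
    (hD : ∀ g h : G, |φ (g * h) - φ g - φ h| ≤ D) :
    |∫ g, φ g ∂ν| ≤ D := by
  have hφ1 : |φ 1| ≤ D := by
    have := hD 1 1
    simp only [one_mul] at this
    calc |φ 1| = |φ 1 - φ 1 - φ 1| := by rw [abs_sub_comm]; congr 1; ring
    _ ≤ D := this
  have hD0 : 0 ≤ D := le_trans (abs_nonneg _) hφ1
  rcases hν with rfl | ⟨hp, hs⟩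
  · simpa using hD0
  haveI := hp
  by_cases hI : Integrable φ ν
  · have hIinv : Integrable (fun g => φ g⁻¹) ν := by
      have h0 : Integrable φ (Measure.map (fun g : G => g⁻¹) ν) := hs.symm ▸ hI
      rwa [integrable_map_measure hmeas.aestronglyMeasurable measurable_inv.aemeasurable] at h0
    have h1 : ∫ g, φ g⁻¹ ∂ν = ∫ g, φ g ∂ν := by
      conv_rhs => rw [← hs]
      rw [integral_map measurable_inv.aemeasurable hmeas.aestronglyMeasurable]
    have hψ : ∀ g : G, |φ g + φ g⁻¹| ≤ 2 * D := by
      intro g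
      have h2 := hD g g⁻¹
      rw [mul_inv_cancel] at h2
      have h3 := abs_le.1 h2
      have h4 := abs_le.1 hφ1
      exact abs_le.2 ⟨by linarith [h3.2, h4.1], by linarith [h3.1, h4.2]⟩
    have hnorm : |∫ g, (φ g + φ g⁻¹) ∂ν| ≤ 2 * D := by
      have := norm_integral_le_of_norm_le_const (μ := ν)
        (f := fun g : G => φ g + φ g⁻¹) (C := 2 * D)
        (Filter.Eventually.of_forall fun g => by simpa [Real.norm_eq_abs] using hψ g)
      simpa [Real.norm_eq_abs, measure_univ] using this
    rw [integral_add hI hIinv, h1] at hnorm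
    have : |2 * ∫ g, φ g ∂ν| ≤ 2 * D := by
      calc |2 * ∫ g, φ g ∂ν| = |∫ g, φ g ∂ν + ∫ g, φ g ∂ν| := by rw [two_mul]
      _ ≤ 2 * D := hnorm
    rw [abs_mul] at this
    simp only [abs_two] at this
    linarith [abs_nonneg (∫ g, φ g ∂ν)]
  · rw [integral_undef hI]
    simpa using hD0
end Bound


/-- for a symmetric regular Borel probability measure `μ` and a Borel
measurable `μ`-integrable quasimorphism `φ`, the μ-distortion vanishes:
`(1/n) ∫ φ dμ^{*n} → 0`. -/
theorem distortion_eq_zero_of_symmetric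
    {G : Type*} [Group G] [TopologicalSpace G] [IsTopologicalGroup G]
    [MeasurableSpace G] [BorelSpace G]
    (μ : Measure G) [IsProbabilityMeasure μ] (hreg : μ.Regular)
    (hsymm : Measure.map (fun g : G => g⁻¹) μ = μ)
    (φ : G → ℝ) (hmeas : Measurable φ)
    (hqm : ∃ D : ℝ, ∀ g h : G, |φ (g * h) - φ g - φ h| ≤ D)
    (hint : Integrable φ μ) :
    Tendsto (fun n : ℕ => (∫ g, φ g ∂(convPow μ n)) / n) atTop (𝓝 0) := by

  obtain ⟨D, hD⟩ := hqm
  have hbound : ∀ n : ℕ, |∫ g, φ g ∂(convPow μ n)| ≤ D := fun n =>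
    integral_abs_le_defect _ ((convPow_key μ hsymm n).imp id (fun h => ⟨h.1, h.2.1⟩))
      φ hmeas D hD
  have hD0 : 0 ≤ D := le_trans (abs_nonneg _) (hbound 0)
  refine squeeze_zero_norm (a := fun n : ℕ => D / n) (fun n => ?_)
    (tendsto_const_div_atTop_nhds_zero_nat D)
  rcases n with _ | n
  · simp
  · rw [Real.norm_eq_abs, abs_div, abs_of_nonneg (by positivity : (0:ℝ) ≤ ((n+1 : ℕ) : ℝ))]
    exact div_le_div_of_nonneg_right (hbound _) (by positivity)
end
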